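/- arXiv:2112.07204 — 4 statements merged into one kernel-verified Lean document; each statement's English description precedes it below -/
import Mathlib

section
/- Let G be a finite undirected graph with maximum degree Δ, and let X be a k-element vertex set with G[X] connected. Then the number of sets X' with |X'| = k, G[X'] connected, |X ∩ X'| = k − 1, and G[X ∩ X'] connected, is at most k · min{n − k, kΔ}, where n is the number of vertices of G. -/
theorem stmt_7 {V : Type*} [Fintype V] [DecidableEq V] (G : SimpleGraph V)
    [DecidableRel G.Adj] (k : ℕ) (X : Finset V) (hXcard : X.card = k)
    (hX : (G.induce (X : Set V)).Connected) :
    {X' : Finset V | X'.card = k ∧ (G.induce (X' : Set V)).Connected ∧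
        (X ∩ X').card = k - 1 ∧
        (G.induce ((X ∩ X' : Finset V) : Set V)).Connected}.ncard ≤
      k * min (Fintype.card V - k) (k * G.maxDegree) := by
  classical
  set N : Finset V := X.biUnion (fun x => G.neighborFinset x) with hN
  set T : Finset V := N \ X with hT
  set F : Finset (Finset V) :=
    (X ×ˢ T).image (fun p => insert p.2 (X.erase p.1)) with hF
  have hsub : {X' : Finset V | X'.card = k ∧ (G.induce (X' : Set V)).Connected ∧
        (X ∩ X').card = k - 1 ∧
        (G.induce ((X ∩ X' : Finset V) : Set V)).Connected} ⊆ (F : Set (Finset V)) := by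
    rintro X' ⟨hcard, hconn, hint, hintconn⟩
    -- X ∩ X' is nonempty, hence k ≥ 2
    have hne : (X ∩ X' : Finset V).Nonempty := by
      have := hintconn.nonempty
      obtain ⟨⟨a, ha⟩⟩ := this
      exact ⟨a, by exact_mod_cast ha⟩
    have hk1 : 1 ≤ k - 1 := by
      have := Finset.card_pos.mpr hne
      omega
    have hk2 : 2 ≤ k := by omega
    -- cardinalities of the differences
    have hXd : (X \ X').card = 1 := by
      have h := Finset.card_inter_add_card_sdiff X X'
      omega
    have hX'd : (X' \ X).card = 1 := by
      have h := Finset.card_inter_add_card_sdiff X' X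
      rw [Finset.inter_comm] at h
      omega
    obtain ⟨x, hx⟩ := Finset.card_eq_one.mp hXd
    obtain ⟨y, hy⟩ := Finset.card_eq_one.mp hX'd
    have hxmem : x ∈ X ∧ x ∉ X' := by
      have : x ∈ X \ X' := hx ▸ Finset.mem_singleton_self x
      exact ⟨(Finset.mem_sdiff.mp this).1, (Finset.mem_sdiff.mp this).2⟩
    have hymem : y ∈ X' ∧ y ∉ X := by
      have : y ∈ X' \ X := hy ▸ Finset.mem_singleton_self y
      exact ⟨(Finset.mem_sdiff.mp this).1, (Finset.mem_sdiff.mp this).2⟩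
    have h1 : ∀ a : V, (a ∈ X ∧ a ∉ X') ↔ a = x := by
      intro a
      rw [← Finset.mem_sdiff, hx, Finset.mem_singleton]
    have h2 : ∀ a : V, (a ∈ X' ∧ a ∉ X) ↔ a = y := by
      intro a
      rw [← Finset.mem_sdiff, hy, Finset.mem_singleton]
    -- X' = insert y (X.erase x)
    have hX'eq : X' = insert y (X.erase x) := by
      ext a
      simp only [Finset.mem_insert, Finset.mem_erase]
      have ha1 := h1 a
      have ha2 := h2 a
      by_cases hax : a ∈ X <;> by_cases hax' : a ∈ X' <;> try tauto
    -- y has a neighbor in X, hence y ∈ T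
    have hyT : y ∈ T := by
      obtain ⟨z, hz⟩ := hne
      have hzX : z ∈ X := (Finset.mem_inter.mp hz).1
      have hzX' : z ∈ X' := (Finset.mem_inter.mp hz).2
      have hzy : z ≠ y := fun h => hymem.2 (h ▸ hzX)
      have hyX' : (y : V) ∈ (X' : Set V) := by exact_mod_cast hymem.1
      have hzX's : (z : V) ∈ (X' : Set V) := by exact_mod_cast hzX'
      obtain ⟨p⟩ := hconn.preconnected ⟨y, hyX'⟩ ⟨z, hzX's⟩
      cases p with
      | nil => exact (hzy rfl).elim
      | @cons _ b _ h q =>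
        -- h : (G.induce ↑X').Adj ⟨y,_⟩ b
        have hadj : G.Adj y (b : V) := h
        have hbX' : (b : V) ∈ X' := by exact_mod_cast b.2
        have hby : (b : V) ≠ y := fun hh => (G.irrefl (hh ▸ hadj))
        have hbX : (b : V) ∈ X := by
          by_contra hbX
          exact hby ((h2 (b : V)).mp ⟨hbX', hbX⟩)
        rw [hT]
        refine Finset.mem_sdiff.mpr ⟨?_, hymem.2⟩
        rw [hN]
        exact Finset.mem_biUnion.mpr ⟨(b : V), hbX,
          (SimpleGraph.mem_neighborFinset G (b : V) y).mpr hadj.symm⟩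
    -- conclude membership in F
    refine Finset.mem_coe.mpr (Finset.mem_image.mpr ⟨(x, y), ?_, ?_⟩)
    · exact Finset.mem_product.mpr ⟨hxmem.1, hyT⟩
    · exact hX'eq.symm
  refine le_trans (le_trans (Set.ncard_le_ncard hsub F.finite_toSet)
    (le_of_eq (Set.ncard_coe_finset F))) ?_
  have hFle : F.card ≤ k * T.card := by
    calc F.card ≤ (X ×ˢ T).card := Finset.card_image_le
    _ = X.card * T.card := Finset.card_product X T
    _ = k * T.card := by rw [hXcard]
  refine le_trans hFle (Nat.mul_le_mul_left k (le_min ?_ ?_))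
  · -- T.card ≤ n - k
    have hTsub : T ⊆ Xᶜ := by
      intro a ha
      rw [Finset.mem_compl]
      exact (Finset.mem_sdiff.mp ha).2
    calc T.card ≤ Xᶜ.card := Finset.card_le_card hTsub
    _ = Fintype.card V - k := by rw [Finset.card_compl, hXcard]
  · -- T.card ≤ k * Δ
    have hTN : T.card ≤ N.card := Finset.card_le_card (Finset.sdiff_subset)
    have hNle : N.card ≤ ∑ x ∈ X, (G.neighborFinset x).card :=
      Finset.card_biUnion_le
    have hsum : ∑ x ∈ X, (G.neighborFinset x).card ≤ k * G.maxDegree := by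
      calc ∑ x ∈ X, (G.neighborFinset x).card
          ≤ ∑ _x ∈ X, G.maxDegree :=
            Finset.sum_le_sum (fun x _ => G.degree_le_maxDegree x)
        _ = k * G.maxDegree := by rw [Finset.sum_const, smul_eq_mul, hXcard]
    omega
end

section
/- Let G be a finite undirected connected graph on n vertices and let X, Y be disjoint k-element vertex sets with G[X] and G[Y] connected. Then the distance d(X, Y) = min{d(x, y) : x ∈ X, y ∈ Y} satisfies d(X, Y) ≤ n − 2k + 1. -/
theorem stmt_11 {V : Type*} [Fintype V] [DecidableEq V] (G : SimpleGraph V)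
    (hG : G.Connected) (k : ℕ) (X Y : Finset V) (hdisj : Disjoint X Y)
    (hXcard : X.card = k) (hYcard : Y.card = k)
    (hX : (G.induce (X : Set V)).Connected) (hY : (G.induce (Y : Set V)).Connected) :
    ∃ x ∈ X, ∃ y ∈ Y, G.dist x y ≤ Fintype.card V - 2 * k + 1 := by
  classical
  -- X and Y are nonempty
  have hXne : X.Nonempty := by
    obtain ⟨⟨v, hv⟩⟩ := hX.nonempty
    exact ⟨v, hv⟩
  have hYne : Y.Nonempty := by
    obtain ⟨⟨v, hv⟩⟩ := hY.nonempty
    exact ⟨v, hv⟩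
  have hk : 1 ≤ k := by
    rw [← hXcard]; exact Finset.card_pos.mpr hXne
  -- choose a pair minimizing distance
  obtain ⟨⟨x, y⟩, hxy, hmin⟩ := (X ×ˢ Y).exists_min_image (fun p => G.dist p.1 p.2)
    ((Finset.nonempty_product).mpr ⟨hXne, hYne⟩)
  rw [Finset.mem_product] at hxy
  obtain ⟨hx, hy⟩ := hxy
  refine ⟨x, hx, y, hy, ?_⟩
  obtain ⟨p, hp, hlen⟩ := hG.exists_path_of_dist x y
  -- splitting lengths
  have hsplit : ∀ v (hv : v ∈ p.support),
      (p.takeUntil v hv).length + (p.dropUntil v hv).length = p.length := by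
    intro v hv
    conv_rhs => rw [← p.take_spec hv]
    rw [SimpleGraph.Walk.length_append]
  -- interior vertices avoid X
  have hSX : ∀ v ∈ p.support, v ∈ X → v = x := by
    intro v hv hvX
    by_contra hne
    have h1 : 1 ≤ (p.takeUntil v hv).length := by
      by_contra h
      push_neg at h
      interval_cases h' : (p.takeUntil v hv).length
      exact hne ((SimpleGraph.Walk.eq_of_length_eq_zero h')).symm
    have h2 : G.dist v y ≤ (p.dropUntil v hv).length := SimpleGraph.dist_le _
    have h3 : G.dist v y < G.dist x y := by
      have := hsplit v hv
      omega
    exact absurd (hmin (v, y) (Finset.mem_product.mpr ⟨hvX, hy⟩)) (not_le.mpr h3)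
  have hSY : ∀ v ∈ p.support, v ∈ Y → v = y := by
    intro v hv hvY
    by_contra hne
    have h1 : 1 ≤ (p.dropUntil v hv).length := by
      by_contra h
      push_neg at h
      interval_cases h' : (p.dropUntil v hv).length
      exact hne (SimpleGraph.Walk.eq_of_length_eq_zero h')
    have h2 : G.dist x v ≤ (p.takeUntil v hv).length := SimpleGraph.dist_le _
    have h3 : G.dist x v < G.dist x y := by
      have := hsplit v hv
      omega
    exact absurd (hmin (x, v) (Finset.mem_product.mpr ⟨hx, hvY⟩)) (not_le.mpr h3)
  -- counting
  set S : Finset V := p.support.toFinset with hS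
  have hScard : S.card = G.dist x y + 1 := by
    rw [hS, List.toFinset_card_of_nodup hp.support_nodup,
      SimpleGraph.Walk.length_support, hlen]
  have hXS : (X \ S).card ≥ k - 1 := by
    have : X \ S ⊇ X.erase x := by
      intro v hv
      rw [Finset.mem_erase] at hv
      rw [Finset.mem_sdiff]
      refine ⟨hv.2, fun hvS => hv.1 (hSX v (List.mem_toFinset.mp hvS) hv.2)⟩
    calc k - 1 = (X.erase x).card := by rw [Finset.card_erase_of_mem hx, hXcard]
    _ ≤ (X \ S).card := Finset.card_le_card this
  have hYS : (Y \ S).card ≥ k - 1 := by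
    have : Y \ S ⊇ Y.erase y := by
      intro v hv
      rw [Finset.mem_erase] at hv
      rw [Finset.mem_sdiff]
      refine ⟨hv.2, fun hvS => hv.1 (hSY v (List.mem_toFinset.mp hvS) hv.2)⟩
    calc k - 1 = (Y.erase y).card := by rw [Finset.card_erase_of_mem hy, hYcard]
    _ ≤ (Y \ S).card := Finset.card_le_card this
  have hd1 : Disjoint S (X \ S) := Finset.disjoint_sdiff
  have hd2 : Disjoint S (Y \ S) := Finset.disjoint_sdiff
  have hd3 : Disjoint (X \ S) (Y \ S) :=
    (hdisj.mono (Finset.sdiff_subset) (Finset.sdiff_subset))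
  have htot : S.card + (X \ S).card + (Y \ S).card ≤ Fintype.card V := by
    have := Finset.card_le_univ (S ∪ (X \ S) ∪ (Y \ S))
    rw [Finset.card_union_of_disjoint (by
      rw [Finset.disjoint_union_left]; exact ⟨hd2, hd3⟩),
      Finset.card_union_of_disjoint hd1] at this
    exact this
  omega
end

section
/- Let G be a finite undirected graph with maximum degree Δ ≥ 2 on n vertices. The number of k-element vertex subsets X with G[X] connected is at most n · (eΔ)^k / ((Δ − 1) · k). -/
set_option linter.unusedSectionVars false

open Finset

namespace Stmt13

variable {V : Type*} [Fintype V] [DecidableEq V] (G : SimpleGraph V) [DecidableRel G.Adj]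

/-- closed neighborhood of a set -/
def nbd (S : Finset V) : Finset V := S ∪ S.biUnion (fun u => G.neighborFinset u)

/-- boundary of a set -/
def bd (S : Finset V) : Finset V := S.biUnion (fun u => G.neighborFinset u) \ S

lemma subset_nbd (S : Finset V) : S ⊆ nbd G S := subset_union_left

lemma mem_nbd {S : Finset V} {x : V} :
    x ∈ nbd G S ↔ x ∈ S ∨ ∃ y ∈ S, G.Adj y x := by
  simp [nbd, mem_union, mem_biUnion]

lemma bd_disj (S : Finset V) : Disjoint S (bd G S) := disjoint_sdiff

lemma nbd_eq_union (S : Finset V) : nbd G S = S ∪ bd G S := by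
  rw [nbd, bd, union_sdiff_self_eq_union]

lemma nbd_card (S : Finset V) : (nbd G S).card = S.card + (bd G S).card := by
  rw [nbd_eq_union, card_union_of_disjoint (bd_disj G S)]

lemma sum_pow_sdiff (d : ℕ) (R : Finset V) :
    ∑ T ∈ R.powerset, d ^ (R \ T).card = (d + 1) ^ R.card := by
  have h := Finset.prod_add (fun _ : V => (1 : ℕ)) (fun _ => d) R
  simp only [prod_const, one_pow, one_mul] at h
  rw [← h, Nat.add_comm 1 d]


def fam (S : Finset V) : Finset (Finset V) := univ.filter fun W => W ∩ nbd G S = S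

lemma mem_fam {S W : Finset V} : W ∈ fam G S ↔ W ∩ nbd G S = S := by
  simp [fam]

lemma subset_of_mem_fam {S W : Finset V} (h : W ∈ fam G S) : S ⊆ W := by
  rw [mem_fam] at h
  rw [← h]
  exact inter_subset_left

lemma sum_vfilter (d : ℕ) (v : V) :
    ∑ W ∈ univ.filter (fun W : Finset V => v ∈ W), d ^ Wᶜ.card
      = (d + 1) ^ (Fintype.card V - 1) := by
  have hcard : ({v}ᶜ : Finset V).card = Fintype.card V - 1 := by
    rw [card_compl, card_singleton]
  rw [← hcard, ← sum_pow_sdiff d ({v}ᶜ)]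
  refine Finset.sum_nbij' (fun W => W.erase v) (fun T => insert v T) ?_ ?_ ?_ ?_ ?_
  · intro W hW
    simp only [mem_filter, mem_univ, true_and] at hW
    rw [mem_powerset]
    intro x hx
    rw [mem_erase] at hx
    simp [hx.1]
  · intro T hT
    simp only [mem_powerset] at hT
    simp [mem_insert]
  · intro W hW
    simp only [mem_filter, mem_univ, true_and] at hW
    exact insert_erase hW
  · intro T hT
    simp only [mem_powerset] at hT
    apply erase_insert
    intro hv
    have := hT hv
    simp at this
  · intro W hW
    simp only [mem_filter, mem_univ, true_and] at hW
    congr 1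
    congr 1
    ext x
    simp only [mem_compl, mem_sdiff, mem_singleton, mem_erase]
    constructor
    · intro hx
      have hxv : x ≠ v := fun h => hx (h ▸ hW)
      exact ⟨hxv, fun h => hx h.2⟩
    · rintro ⟨hxv, h⟩ hxW
      exact h ⟨hxv, hxW⟩

lemma fam_sum_ge (d : ℕ) (S : Finset V) :
    d ^ (bd G S).card * (d + 1) ^ ((nbd G S)ᶜ).card ≤ ∑ W ∈ fam G S, d ^ Wᶜ.card := by
  set N := nbd G S with hN
  have hSN : S ⊆ N := subset_nbd G S
  have hdisjST : ∀ T ∈ (Nᶜ : Finset V).powerset, Disjoint S T := by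
    intro T hT
    rw [mem_powerset] at hT
    exact Finset.disjoint_left.mpr fun x hxS hxT => by
      have := hT hxT; rw [mem_compl] at this; exact this (hSN hxS)
  have key : ∑ T ∈ (Nᶜ : Finset V).powerset, d ^ ((S ∪ T)ᶜ).card
      = d ^ (bd G S).card * (d + 1) ^ (Nᶜ : Finset V).card := by
    rw [← sum_pow_sdiff d (Nᶜ), mul_sum]
    refine Finset.sum_congr rfl fun T hT => ?_
    rw [← pow_add]
    congr 1
    have hTN : T ⊆ Nᶜ := mem_powerset.mp hT
    have hdisj : Disjoint (bd G S) (Nᶜ \ T) := by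
      refine Finset.disjoint_left.mpr fun x hx1 hx2 => ?_
      have hxN : x ∈ N := by rw [hN, nbd_eq_union]; exact mem_union_right _ hx1
      rw [mem_sdiff, mem_compl] at hx2
      exact hx2.1 hxN
    rw [← card_union_of_disjoint hdisj]
    congr 1
    ext x
    have h1 : x ∈ T → x ∉ N := fun h => mem_compl.mp (hTN h)
    have h2 : x ∈ S → x ∈ N := fun h => hSN h
    have h3 : x ∈ bd G S ↔ x ∈ N ∧ x ∉ S := by
      rw [hN, nbd_eq_union, mem_union]
      constructor
      · intro h; exact ⟨Or.inr h, (Finset.disjoint_right.mp (bd_disj G S)) h⟩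
      · rintro ⟨h | h, h'⟩
        · exact absurd h h'
        · exact h
    simp only [mem_compl, mem_union, mem_sdiff, h3]
    by_cases hxN : x ∈ N <;> tauto
  rw [← key]
  have himg : ((Nᶜ : Finset V).powerset).image (fun T => S ∪ T) ⊆ fam G S := by
    intro W hW
    rw [mem_image] at hW
    obtain ⟨T, hT, rfl⟩ := hW
    have hTN : T ⊆ Nᶜ := mem_powerset.mp hT
    rw [mem_fam]
    ext x
    simp only [mem_inter, mem_union]
    constructor
    · rintro ⟨hx1 | hx1, hx2⟩
      · exact hx1
      · exact absurd hx2 (mem_compl.mp (hTN hx1))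
    · intro h; exact ⟨Or.inl h, hSN h⟩
  calc ∑ T ∈ (Nᶜ : Finset V).powerset, d ^ ((S ∪ T)ᶜ).card
      = ∑ W ∈ ((Nᶜ : Finset V).powerset).image (fun T => S ∪ T), d ^ Wᶜ.card := by
        rw [Finset.sum_image]
        intro T hT T' hT' h
        have : Disjoint S T := hdisjST T hT
        have : T = (S ∪ T) \ S := by
          rw [union_sdiff_left, sdiff_eq_self_of_disjoint (hdisjST T hT).symm]
        rw [this, show S ∪ T = S ∪ T' from h, union_sdiff_left, sdiff_eq_self_of_disjoint (hdisjST T' hT').symm]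
    _ ≤ ∑ W ∈ fam G S, d ^ Wᶜ.card := Finset.sum_le_sum_of_subset himg


lemma walk_subset {S S' W : Finset V} (hSW : S ⊆ W)
    (hW : ∀ z ∈ W, ∀ y ∈ S', G.Adj y z → z ∈ S') :
    ∀ {a b : (↑S : Set V)}, (G.induce (↑S : Set V)).Walk a b → (a : V) ∈ S' → (b : V) ∈ S' := by
  intro a b w
  induction w with
  | nil => exact id
  | @cons x y z h p ih =>
    intro hx
    have hyS : (y : V) ∈ S := Finset.mem_coe.mp y.2
    have hadj : G.Adj (x : V) (y : V) := h
    exact ih (hW _ (hSW hyS) _ hx hadj)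

lemma fam_disjoint {v : V} {S S' : Finset V} (hv : v ∈ S) (hv' : v ∈ S')
    (hc : (G.induce (↑S : Set V)).Connected) (hc' : (G.induce (↑S' : Set V)).Connected)
    (hne : S ≠ S') : Disjoint (fam G S) (fam G S') := by
  rw [Finset.disjoint_left]
  intro W hW hW'
  apply hne
  have key : ∀ (A B : Finset V), v ∈ A → v ∈ B → (G.induce (↑A : Set V)).Connected →
      W ∩ nbd G A = A → W ∩ nbd G B = B → A ⊆ B := by
    intro A B hvA hvB hcA hA hB x hx
    have hAW : A ⊆ W := hA ▸ inter_subset_left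
    have hWB : ∀ z ∈ W, ∀ y ∈ B, G.Adj y z → z ∈ B := by
      intro z hz y hy hadj
      rw [← hB, mem_inter]
      exact ⟨hz, (mem_nbd G).mpr (Or.inr ⟨y, hy, hadj⟩)⟩
    obtain ⟨p⟩ := hcA.preconnected ⟨v, Finset.mem_coe.mpr hvA⟩ ⟨x, Finset.mem_coe.mpr hx⟩
    exact walk_subset G hAW hWB p hvB
  exact Finset.Subset.antisymm (key S S' hv hv' hc ((mem_fam G).mp hW) ((mem_fam G).mp hW'))
    (key S' S hv' hv hc' ((mem_fam G).mp hW') ((mem_fam G).mp hW))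

lemma exists_adj_of_connected {S : Finset V} (hc : (G.induce (↑S : Set V)).Connected)
    (h2 : 2 ≤ S.card) {u : V} (hu : u ∈ S) : ∃ w ∈ S, G.Adj u w := by
  obtain ⟨x, hx, hxu⟩ := Finset.exists_mem_ne (show 1 < S.card by omega) u
  have haux : ∀ {a b : (↑S : Set V)}, (G.induce (↑S : Set V)).Walk a b → a ≠ b →
      ∃ w : (↑S : Set V), (G.induce (↑S : Set V)).Adj a w := by
    intro a b w
    induction w with
    | nil => intro h; exact absurd rfl h
    | cons h p ih => intro _; exact ⟨_, h⟩
  have hne : (⟨u, Finset.mem_coe.mpr hu⟩ : (↑S : Set V)) ≠ ⟨x, Finset.mem_coe.mpr hx⟩ := by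
    intro h
    exact hxu (congrArg Subtype.val h).symm
  obtain ⟨p⟩ := hc.preconnected ⟨u, Finset.mem_coe.mpr hu⟩ ⟨x, Finset.mem_coe.mpr hx⟩
  obtain ⟨w, hw⟩ := haux p hne
  exact ⟨w, Finset.mem_coe.mp w.2, hw⟩

lemma bd_card_le {S : Finset V} (hc : (G.induce (↑S : Set V)).Connected) (h2 : 2 ≤ S.card) :
    (bd G S).card ≤ S.card * (G.maxDegree - 1) := by
  have h1 : bd G S ⊆ S.biUnion (fun u => G.neighborFinset u \ S) := by
    intro x hx
    rw [bd, mem_sdiff, mem_biUnion] at hx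
    obtain ⟨⟨u, hu, hxu⟩, hxS⟩ := hx
    exact mem_biUnion.mpr ⟨u, hu, mem_sdiff.mpr ⟨hxu, hxS⟩⟩
  calc (bd G S).card ≤ (S.biUnion (fun u => G.neighborFinset u \ S)).card := card_le_card h1
    _ ≤ ∑ u ∈ S, (G.neighborFinset u \ S).card := card_biUnion_le
    _ ≤ ∑ u ∈ S, (G.maxDegree - 1) := by
        refine sum_le_sum fun u hu => ?_
        obtain ⟨w, hwS, hadj⟩ := exists_adj_of_connected G hc h2 hu
        have hw : w ∈ G.neighborFinset u ∩ S :=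
          mem_inter.mpr ⟨(SimpleGraph.mem_neighborFinset G u w).mpr hadj, hwS⟩
        have hpos : 1 ≤ (G.neighborFinset u ∩ S).card := card_pos.mpr ⟨w, hw⟩
        have hsum := card_sdiff_add_card_inter (G.neighborFinset u) S
        have hdeg : (G.neighborFinset u).card ≤ G.maxDegree := by
          rw [SimpleGraph.card_neighborFinset_eq_degree]
          exact G.degree_le_maxDegree u
        omega
    _ = S.card * (G.maxDegree - 1) := by rw [sum_const, smul_eq_mul]

lemma pervertex (hΔ : 1 ≤ G.maxDegree) (k : ℕ) (v : V) (𝒮 : Finset (Finset V))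
    (h𝒮 : ∀ S ∈ 𝒮, S.card = k ∧ v ∈ S ∧ (G.induce (↑S : Set V)).Connected) :
    ∑ S ∈ 𝒮, (G.maxDegree - 1) ^ (bd G S).card * G.maxDegree ^ ((nbd G S)ᶜ).card
      ≤ G.maxDegree ^ (Fintype.card V - 1) := by
  set d := G.maxDegree - 1 with hd
  have hd1 : d + 1 = G.maxDegree := by omega
  have hpd : (↑𝒮 : Set (Finset V)).PairwiseDisjoint (fam G) := by
    intro S hS S' hS' hne
    obtain ⟨-, hvS, hcS⟩ := h𝒮 S (by exact_mod_cast hS)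
    obtain ⟨-, hvS', hcS'⟩ := h𝒮 S' (by exact_mod_cast hS')
    exact fam_disjoint G hvS hvS' hcS hcS' hne
  have hsub : 𝒮.biUnion (fam G) ⊆ univ.filter (fun W : Finset V => v ∈ W) := by
    intro W hW
    rw [mem_biUnion] at hW
    obtain ⟨S, hS, hWS⟩ := hW
    obtain ⟨-, hvS, -⟩ := h𝒮 S hS
    exact mem_filter.mpr ⟨mem_univ _, subset_of_mem_fam G hWS hvS⟩
  calc ∑ S ∈ 𝒮, d ^ (bd G S).card * G.maxDegree ^ ((nbd G S)ᶜ).card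
      ≤ ∑ S ∈ 𝒮, ∑ W ∈ fam G S, d ^ Wᶜ.card := by
        refine sum_le_sum fun S hS => ?_
        rw [← hd1]
        exact fam_sum_ge G d S
    _ = ∑ W ∈ 𝒮.biUnion (fam G), d ^ Wᶜ.card := (sum_biUnion hpd).symm
    _ ≤ ∑ W ∈ univ.filter (fun W : Finset V => v ∈ W), d ^ Wᶜ.card :=
        sum_le_sum_of_subset hsub
    _ = (d + 1) ^ (Fintype.card V - 1) := sum_vfilter d v
    _ = G.maxDegree ^ (Fintype.card V - 1) := by rw [hd1]


lemma pervertex_real (hΔ : 2 ≤ G.maxDegree) {k : ℕ} (hk2 : 2 ≤ k)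
    (hkn : k ≤ Fintype.card V) (v : V) (𝒮 : Finset (Finset V))
    (h𝒮 : ∀ S ∈ 𝒮, S.card = k ∧ v ∈ S ∧ (G.induce (↑S : Set V)).Connected) :
    (𝒮.card : ℝ) ≤ (G.maxDegree : ℝ) ^ (k - 1) * Real.exp 1 ^ k := by
  set Δ := G.maxDegree with hΔdef
  set n := Fintype.card V with hn
  set D : ℝ := (Δ : ℝ) with hD
  have hD2 : (2 : ℝ) ≤ D := by rw [hD]; exact_mod_cast hΔ
  have hDpos : (0 : ℝ) < D := by linarith
  have hdpos : (0 : ℝ) < D - 1 := by linarith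
  have hdcast : ((Δ - 1 : ℕ) : ℝ) = D - 1 := by
    rw [hD, hΔdef]
    push_cast [Nat.cast_sub (show 1 ≤ G.maxDegree by rw [← hΔdef]; omega)]
    ring
  have hratio : (0 : ℝ) ≤ (D - 1) / D := le_of_lt (div_pos hdpos hDpos)
  have hratio1 : (D - 1) / D ≤ 1 := by
    rw [div_le_one hDpos]; linarith
  -- the exponential bound
  have hexp : (D / (D - 1)) ^ (Δ - 1) ≤ Real.exp 1 := by
    have h1 : D / (D - 1) = 1 / (D - 1) + 1 := by field_simp; ring
    have h2 : D / (D - 1) ≤ Real.exp (1 / (D - 1)) := by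
      rw [h1]; exact Real.add_one_le_exp _
    calc (D / (D - 1)) ^ (Δ - 1) ≤ Real.exp (1 / (D - 1)) ^ (Δ - 1) := by
          apply pow_le_pow_left₀ (le_of_lt (div_pos hDpos hdpos)) h2
      _ = Real.exp (((Δ - 1 : ℕ) : ℝ) * (1 / (D - 1))) := by
          rw [← Real.exp_nat_mul]
      _ = Real.exp 1 := by
          rw [hdcast]
          congr 1
          field_simp
  -- per-term lower bound
  have hterm : ∀ S ∈ 𝒮,
      D ^ (n - k) * ((D - 1) / D) ^ (k * (Δ - 1))
        ≤ ((Δ - 1 : ℕ) : ℝ) ^ (bd G S).card * D ^ (((nbd G S)ᶜ : Finset V).card) := by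
    intro S hS
    obtain ⟨hcard, hvS, hconn⟩ := h𝒮 S hS
    set B := (bd G S).card with hB
    have hnbd : (nbd G S).card = k + B := by rw [nbd_card, hcard]
    have hBn : k + B ≤ n := by rw [← hnbd, hn]; exact card_le_card (subset_univ _)
    have hcompl : ((nbd G S)ᶜ : Finset V).card = n - k - B := by
      rw [card_compl, hnbd, hn]; omega
    have hBle : B ≤ k * (Δ - 1) := by
      rw [hB, ← hcard]; exact bd_card_le G hconn (hcard ▸ hk2)
    rw [hcompl, hdcast]
    have hsplit : D ^ (n - k) = D ^ (n - k - B) * D ^ B := by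
      rw [← pow_add]; congr 1; omega
    have hDB : (D - 1) ^ B = D ^ B * ((D - 1) / D) ^ B := by
      rw [div_pow]
      field_simp
    rw [hsplit, hDB]
    have hmono : ((D - 1) / D) ^ (k * (Δ - 1)) ≤ ((D - 1) / D) ^ B :=
      pow_le_pow_of_le_one hratio hratio1 hBle
    calc D ^ (n - k - B) * D ^ B * ((D - 1) / D) ^ (k * (Δ - 1))
        ≤ D ^ (n - k - B) * D ^ B * ((D - 1) / D) ^ B := by
          apply mul_le_mul_of_nonneg_left hmono; positivity
      _ = D ^ B * ((D - 1) / D) ^ B * D ^ (n - k - B) := by ring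
  -- sum bound from pervertex
  have hsum : (𝒮.card : ℝ) * (D ^ (n - k) * ((D - 1) / D) ^ (k * (Δ - 1)))
      ≤ D ^ (n - 1) := by
    have hnat := pervertex G (by omega) k v 𝒮 h𝒮
    have hcast : (∑ S ∈ 𝒮, ((Δ - 1 : ℕ) : ℝ) ^ (bd G S).card
        * D ^ (((nbd G S)ᶜ : Finset V).card)) ≤ D ^ (n - 1) := by
      calc (∑ S ∈ 𝒮, ((Δ - 1 : ℕ) : ℝ) ^ (bd G S).card
            * D ^ (((nbd G S)ᶜ : Finset V).card))
          = ((∑ S ∈ 𝒮, (Δ - 1) ^ (bd G S).card * Δ ^ (((nbd G S)ᶜ : Finset V).card) : ℕ) : ℝ) := by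
            push_cast; rfl
        _ ≤ ((Δ ^ (n - 1) : ℕ) : ℝ) := by exact_mod_cast hnat
        _ = D ^ (n - 1) := by push_cast; rfl
    calc (𝒮.card : ℝ) * (D ^ (n - k) * ((D - 1) / D) ^ (k * (Δ - 1)))
        = ∑ _S ∈ 𝒮, D ^ (n - k) * ((D - 1) / D) ^ (k * (Δ - 1)) := by
          rw [sum_const, nsmul_eq_mul]
      _ ≤ ∑ S ∈ 𝒮, ((Δ - 1 : ℕ) : ℝ) ^ (bd G S).card
            * D ^ (((nbd G S)ᶜ : Finset V).card) := sum_le_sum hterm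
      _ ≤ D ^ (n - 1) := hcast
  -- now conclude
  have hX : (0 : ℝ) < D ^ (n - k) * ((D - 1) / D) ^ (k * (Δ - 1)) := by positivity
  rw [← mul_le_mul_iff_of_pos_right hX]
  calc (𝒮.card : ℝ) * (D ^ (n - k) * ((D - 1) / D) ^ (k * (Δ - 1)))
      ≤ D ^ (n - 1) := hsum
    _ ≤ D ^ (k - 1) * Real.exp 1 ^ k * (D ^ (n - k) * ((D - 1) / D) ^ (k * (Δ - 1))) := by
        have hsplit : D ^ (n - 1) = D ^ (k - 1) * D ^ (n - k) := by
          rw [← pow_add]; congr 1; omega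
        rw [hsplit]
        have hkey : 1 ≤ Real.exp 1 ^ k * ((D - 1) / D) ^ (k * (Δ - 1)) := by
          have h1 : ((D / (D - 1)) ^ (Δ - 1)) ^ k ≤ Real.exp 1 ^ k :=
            pow_le_pow_left₀ (by positivity) hexp k
          have h2 : ((D / (D - 1)) ^ (Δ - 1)) ^ k = (D / (D - 1)) ^ (k * (Δ - 1)) := by
            rw [← pow_mul, Nat.mul_comm]
          have h3 : (D / (D - 1)) ^ (k * (Δ - 1)) * ((D - 1) / D) ^ (k * (Δ - 1)) = 1 := by
            rw [← mul_pow, div_mul_div_comm, mul_comm D (D - 1), div_self (by positivity), one_pow]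
          calc (1 : ℝ) = (D / (D - 1)) ^ (k * (Δ - 1)) * ((D - 1) / D) ^ (k * (Δ - 1)) := h3.symm
            _ ≤ Real.exp 1 ^ k * ((D - 1) / D) ^ (k * (Δ - 1)) := by
                apply mul_le_mul_of_nonneg_right _ (by positivity)
                rw [← h2]; exact h1
        calc D ^ (k - 1) * D ^ (n - k)
            = D ^ (k - 1) * D ^ (n - k) * 1 := by ring
          _ ≤ D ^ (k - 1) * D ^ (n - k) * (Real.exp 1 ^ k * ((D - 1) / D) ^ (k * (Δ - 1))) := by
              apply mul_le_mul_of_nonneg_left hkey; positivity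
          _ = D ^ (k - 1) * Real.exp 1 ^ k * (D ^ (n - k) * ((D - 1) / D) ^ (k * (Δ - 1))) := by
              ring

end Stmt13

open Finset Stmt13

theorem stmt_13 {V : Type*} [Fintype V] [DecidableEq V] (G : SimpleGraph V)
    [DecidableRel G.Adj] (hΔ : 2 ≤ G.maxDegree) (k : ℕ) :
    ({X : Finset V | X.card = k ∧ (G.induce (X : Set V)).Connected}.ncard : ℝ) ≤
      (Fintype.card V : ℝ) * (Real.exp 1 * G.maxDegree) ^ k /
        (((G.maxDegree : ℝ) - 1) * k) := by
  classical
  set n := Fintype.card V with hn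
  set D : ℝ := (G.maxDegree : ℝ) with hD
  have hD2 : (2 : ℝ) ≤ D := by rw [hD]; exact_mod_cast hΔ
  have hDpos : (0 : ℝ) < D := by linarith
  have hdpos : (0 : ℝ) < D - 1 := by linarith
  have he1 : (1 : ℝ) ≤ Real.exp 1 := by
    have := Real.add_one_le_exp (1 : ℝ); linarith
  set 𝒮 : Finset (Finset V) :=
    univ.filter (fun X : Finset V => X.card = k ∧ (G.induce (X : Set V)).Connected) with h𝒮def
  have hset : {X : Finset V | X.card = k ∧ (G.induce (X : Set V)).Connected}
      = (↑𝒮 : Set (Finset V)) := by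
    ext X; simp [h𝒮def]
  rw [hset, Set.ncard_coe_finset]
  rcases Nat.eq_zero_or_pos k with rfl | hk1
  · -- k = 0
    have h𝒮 : 𝒮 = ∅ := by
      rw [Finset.eq_empty_iff_forall_notMem]
      intro X hX
      simp only [h𝒮def, mem_filter, mem_univ, true_and] at hX
      obtain ⟨hc, hconn⟩ := hX
      obtain ⟨⟨x, hx⟩⟩ := hconn.nonempty
      rw [Finset.card_eq_zero.mp hc] at hx
      simp at hx
    rw [h𝒮]
    simp
  rcases eq_or_lt_of_le (show 1 ≤ k from hk1) with hk1' | hk2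
  · -- k = 1
    have hk1'' : k = 1 := hk1'.symm
    subst hk1''
    have hsub : 𝒮 ⊆ univ.image (fun v : V => ({v} : Finset V)) := by
      intro X hX
      simp only [h𝒮def, mem_filter, mem_univ, true_and] at hX
      obtain ⟨a, rfl⟩ := Finset.card_eq_one.mp hX.1
      exact mem_image.mpr ⟨a, mem_univ a, rfl⟩
    have hcard : (𝒮.card : ℝ) ≤ n := by
      calc (𝒮.card : ℝ) ≤ ((univ.image (fun v : V => ({v} : Finset V))).card : ℝ) := by
            exact_mod_cast card_le_card hsub
        _ ≤ ((univ : Finset V).card : ℝ) := by exact_mod_cast card_image_le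
        _ = n := by rw [hn, card_univ]
    calc (𝒮.card : ℝ) ≤ n := hcard
      _ ≤ (n : ℝ) * (Real.exp 1 * D) ^ 1 / ((D - 1) * 1) := by
          rw [pow_one, mul_one, le_div_iff₀ hdpos]
          have hde : D - 1 ≤ Real.exp 1 * D := by nlinarith
          exact mul_le_mul_of_nonneg_left hde (Nat.cast_nonneg n)
      _ = (n : ℝ) * (Real.exp 1 * D) ^ 1 / ((D - 1) * (1:ℕ)) := by norm_num
  · -- 2 ≤ k
    rcases Finset.eq_empty_or_nonempty 𝒮 with h𝒮 | ⟨X0, hX0⟩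
    · rw [h𝒮]
      simp only [card_empty, Nat.cast_zero]
      apply div_nonneg
      · positivity
      · exact mul_nonneg (by linarith) (Nat.cast_nonneg k)
    have hkn : k ≤ n := by
      have hX0' := (mem_filter.mp hX0).2.1
      rw [← hX0', hn]
      exact card_le_card (subset_univ _)
    have hdc : ∑ v : V, (𝒮.filter (fun S => v ∈ S)).card = 𝒮.card * k := by
      calc ∑ v : V, (𝒮.filter (fun S => v ∈ S)).card
          = ∑ v : V, ∑ S ∈ 𝒮, if v ∈ S then 1 else 0 := by
            exact sum_congr rfl fun v _ => card_filter _ _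
        _ = ∑ S ∈ 𝒮, ∑ v : V, if v ∈ S then 1 else 0 := sum_comm
        _ = ∑ S ∈ 𝒮, S.card := by
            refine sum_congr rfl fun S hS => ?_
            rw [Finset.sum_ite_mem, Finset.univ_inter, Finset.sum_const, smul_eq_mul, mul_one]
        _ = 𝒮.card * k := by
            rw [Finset.sum_congr rfl (fun S hS => (mem_filter.mp hS).2.1), sum_const, smul_eq_mul]
    have hperv : ∀ v : V, ((𝒮.filter (fun S => v ∈ S)).card : ℝ)
        ≤ D ^ (k - 1) * Real.exp 1 ^ k := by
      intro v
      refine pervertex_real G hΔ hk2 (by rw [← hn]; exact hkn) v _ ?_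
      intro S hS
      rw [mem_filter] at hS
      obtain ⟨hS1, hS2⟩ := hS
      rw [h𝒮def, mem_filter] at hS1
      exact ⟨hS1.2.1, hS2, hS1.2.2⟩
    have hmain : (𝒮.card : ℝ) * k ≤ n * (D ^ (k - 1) * Real.exp 1 ^ k) := by
      calc (𝒮.card : ℝ) * k = ((𝒮.card * k : ℕ) : ℝ) := by push_cast; ring
        _ = ((∑ v : V, (𝒮.filter (fun S => v ∈ S)).card : ℕ) : ℝ) := by rw [hdc]
        _ = ∑ v : V, ((𝒮.filter (fun S => v ∈ S)).card : ℝ) := by push_cast; rfl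
        _ ≤ ∑ _v : V, (D ^ (k - 1) * Real.exp 1 ^ k) := sum_le_sum fun v _ => hperv v
        _ = n * (D ^ (k - 1) * Real.exp 1 ^ k) := by
            rw [sum_const, card_univ, nsmul_eq_mul, hn]
    have hkpos : (0 : ℝ) < k := by exact_mod_cast hk1
    rw [le_div_iff₀ (by positivity)]
    calc (𝒮.card : ℝ) * ((D - 1) * k) = ((𝒮.card : ℝ) * k) * (D - 1) := by ring
      _ ≤ (n * (D ^ (k - 1) * Real.exp 1 ^ k)) * (D - 1) :=
          mul_le_mul_of_nonneg_right hmain (le_of_lt hdpos)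
      _ ≤ n * (Real.exp 1 * D) ^ k := by
          rw [mul_pow]
          have hDk : D ^ (k - 1) * (D - 1) ≤ D ^ k := by
            have hp : (0 : ℝ) < D ^ (k - 1) := pow_pos hDpos _
            calc D ^ (k - 1) * (D - 1) ≤ D ^ (k - 1) * D := by nlinarith
              _ = D ^ k := by rw [← pow_succ]; congr 1; omega
          calc (n : ℝ) * (D ^ (k - 1) * Real.exp 1 ^ k) * (D - 1)
              = (n : ℝ) * Real.exp 1 ^ k * (D ^ (k - 1) * (D - 1)) := by ring
            _ ≤ (n : ℝ) * Real.exp 1 ^ k * D ^ k := by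
                apply mul_le_mul_of_nonneg_left hDk; positivity
            _ = (n : ℝ) * (Real.exp 1 ^ k * D ^ k) := by ring
end

section
/- Let G be a finite undirected graph and X a k-element vertex set with G[X] connected, k ≥ 2. Let u ∈ X be a vertex that is not a cut vertex of G[X], and let w ∉ X be a vertex adjacent in G to some vertex of X \ {u}. Then X' = (X \ {u}) ∪ {w} has size k, G[X'] is connected, and G[X ∩ X'] is connected. -/
theorem stmt_16 {V : Type*} [Fintype V] [DecidableEq V] (G : SimpleGraph V)
    (k : ℕ) (hk : 2 ≤ k) (X : Finset V) (hXcard : X.card = k)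
    (hX : (G.induce (X : Set V)).Connected)
    (u : V) (hu : u ∈ X) (hucut : (G.induce ((X.erase u : Finset V) : Set V)).Connected)
    (w : V) (hwX : w ∉ X) (hwadj : ∃ x ∈ X.erase u, G.Adj x w) :
    (insert w (X.erase u)).card = k ∧
      (G.induce ((insert w (X.erase u) : Finset V) : Set V)).Connected ∧
      (G.induce ((X ∩ insert w (X.erase u) : Finset V) : Set V)).Connected := by
  obtain ⟨x, hx, hxw⟩ := hwadj
  have hwE : w ∉ X.erase u := fun h => hwX (Finset.mem_of_mem_erase h)
  refine ⟨?_, ?_, ?_⟩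
  · rw [Finset.card_insert_of_notMem hwE, Finset.card_erase_of_mem hu, hXcard]
    omega
  · have hsing : (G.induce ({w} : Set V)).Connected := by
      haveI : Nonempty ({w} : Set V) := ⟨⟨w, rfl⟩⟩
      constructor
      intro a b
      have hab : a = b := Subtype.ext (a.2.trans b.2.symm)
      exact hab ▸ SimpleGraph.Reachable.refl a
    have h := G.connected_induce_union hucut.preconnected hsing.preconnected (by exact_mod_cast hx) rfl hxw
    have hset : ((insert w (X.erase u) : Finset V) : Set V)
        = (↑(X.erase u) : Set V) ∪ {w} := by
      ext y; simp [or_comm]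
    rw [hset]
    exact h
  · have hEq : X ∩ insert w (X.erase u) = X.erase u := by
      ext y
      simp only [Finset.mem_inter, Finset.mem_insert, Finset.mem_erase]
      constructor
      · rintro ⟨hy, rfl | hy2⟩
        · exact absurd hy hwX
        · exact hy2
      · rintro ⟨hy1, hy2⟩; exact ⟨hy2, Or.inr ⟨hy1, hy2⟩⟩
    rw [hEq]
    exact hucut
end
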